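/- arXiv:1306.0325 — 4 statements merged into one kernel-verified Lean document; each statement's English description precedes it below -/
import Mathlib

section
/- Let x, y ∈ ℝ^d with x ≠ 0 and suppose 0 < λ₁'‖x‖² ≤ ⟨x, y⟩ ≤ λ₂'‖x‖² and ‖y‖ ≤ C‖x‖ for constants 0 < λ₁' ≤ λ₂' and C > 0. Then there exists a symmetric positive definite d×d matrix M with y = Mx and all eigenvalues of M contained in an interval [λ₁, λ₂] with 0 < λ₁ ≤ λ₂ < ∞, where λ₁ and λ₂ depend only on λ₁', λ₂', C. -/
open scoped RealInnerProductSpace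
open Matrix

private lemma vecMulVec_mulVec' {d : ℕ} (w u v : Fin d → ℝ) :
    (Matrix.vecMulVec w u) *ᵥ v = (u ⬝ᵥ v) • w := by
  funext i
  simp [Matrix.mulVec, Matrix.vecMulVec_apply, dotProduct, Finset.mul_sum, mul_assoc]
  rw [Finset.sum_mul]
  congr 1; funext j; ring

private lemma dot_inner {d : ℕ} (a b : EuclideanSpace ℝ (Fin d)) :
    dotProduct (a : Fin d → ℝ) (b : Fin d → ℝ) = ⟪a, b⟫ := by
  simp [PiLp.inner_apply, dotProduct, mul_comm]

theorem stmt1 (l1' l2' C : ℝ) (hl1' : 0 < l1') (hl12' : l1' ≤ l2') (hC : 0 < C) :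
    ∃ l1 l2 : ℝ, 0 < l1 ∧ l1 ≤ l2 ∧
      ∀ {d : ℕ} (x y : EuclideanSpace ℝ (Fin d)), x ≠ 0 →
        l1' * ‖x‖ ^ 2 ≤ ⟪x, y⟫ → ⟪x, y⟫ ≤ l2' * ‖x‖ ^ 2 → ‖y‖ ≤ C * ‖x‖ →
        ∃ (M : Matrix (Fin d) (Fin d) ℝ) (hM : M.PosDef),
          (y : Fin d → ℝ) = M.mulVec x ∧
          ∀ i, l1 ≤ hM.1.eigenvalues i ∧ hM.1.eigenvalues i ≤ l2 := by
  set l1 : ℝ := l1' / 2 with hl1def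
  have hl1pos : 0 < l1 := by positivity
  refine ⟨l1, l1 + 2 * (C + l1) ^ 2 / l1', hl1pos,
    le_add_of_nonneg_right (by positivity), ?_⟩
  intro d x y hx h1 h2 h3
  have hxn : 0 < ‖x‖ := norm_pos_iff.mpr hx
  set w : EuclideanSpace ℝ (Fin d) := y - l1 • x with hwdef
  set s : ℝ := ⟪x, w⟫ with hsdef
  obtain ⟨wf, hwf⟩ : ∃ wf : Fin d → ℝ, wf = (w : Fin d → ℝ) := ⟨_, rfl⟩
  have hs_eq : s = ⟪x, y⟫ - l1 * ‖x‖ ^ 2 := by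
    rw [hsdef, hwdef, inner_sub_right, real_inner_smul_right,
      real_inner_self_eq_norm_sq]
  have hs_lb : l1 * ‖x‖ ^ 2 ≤ s := by rw [hs_eq]; nlinarith
  have hs_pos : 0 < s := lt_of_lt_of_le (by positivity) hs_lb
  set M : Matrix (Fin d) (Fin d) ℝ :=
    l1 • 1 + s⁻¹ • Matrix.vecMulVec wf wf with hMdef
  -- action of M
  have hact : ∀ v : Fin d → ℝ,
      M *ᵥ v = l1 • v + (s⁻¹ * (wf ⬝ᵥ v)) • wf := by
    intro v
    rw [hMdef, Matrix.add_mulVec, Matrix.smul_mulVec, Matrix.one_mulVec,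
      Matrix.smul_mulVec, vecMulVec_mulVec', smul_smul]
  -- quadratic form
  have hquad : ∀ v : Fin d → ℝ,
      v ⬝ᵥ (M *ᵥ v) = l1 * (v ⬝ᵥ v) + s⁻¹ * (wf ⬝ᵥ v) ^ 2 := by
    intro v
    rw [hact v, dotProduct_add, dotProduct_smul, dotProduct_smul,
      dotProduct_comm v wf]
    simp only [smul_eq_mul]
    ring
  have hherm : M.IsHermitian := by
    rw [Matrix.IsHermitian]
    ext i j
    simp [hMdef, Matrix.conjTranspose_apply, Matrix.one_apply, Matrix.vecMulVec_apply,
      Matrix.add_apply, Matrix.smul_apply, eq_comm, mul_comm]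
  have hPD : M.PosDef := by
    refine posDef_iff_dotProduct_mulVec.mpr ⟨hherm, fun v hv => ?_⟩
    have hvnn : 0 ≤ v ⬝ᵥ v := Finset.sum_nonneg fun i _ => mul_self_nonneg _
    have hvpos : 0 < v ⬝ᵥ v :=
      lt_of_le_of_ne hvnn (fun h => hv (dotProduct_self_eq_zero.mp h.symm))
    have hst : star v = v := by simp
    rw [hst, hquad v]
    have h2' : 0 ≤ s⁻¹ * (wf ⬝ᵥ v) ^ 2 := by positivity
    nlinarith
  refine ⟨M, hPD, ?_, ?_⟩
  · -- y = M x
    rw [hact (x : Fin d → ℝ)]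
    have hwx : wf ⬝ᵥ (x : Fin d → ℝ) = s := by
      rw [hwf, dot_inner w x, real_inner_comm, ← hsdef]
    rw [hwx, mul_comm, mul_inv_cancel₀ (ne_of_gt hs_pos), one_smul]
    funext i
    have hwi : wf i = y i - l1 * x i := by rw [hwf]; rfl
    simp only [Pi.add_apply, Pi.smul_apply, smul_eq_mul, hwi]
    ring
  · intro i
    set v : EuclideanSpace ℝ (Fin d) := hPD.1.eigenvectorBasis i with hvdef
    have hmv : M *ᵥ (v : Fin d → ℝ) = hPD.1.eigenvalues i • (v : Fin d → ℝ) :=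
      hPD.1.mulVec_eigenvectorBasis i
    have hnv : ‖v‖ = 1 := hPD.1.eigenvectorBasis.orthonormal.1 i
    have hvv : (v : Fin d → ℝ) ⬝ᵥ (v : Fin d → ℝ) = 1 := by
      rw [dot_inner v v, real_inner_self_eq_norm_sq, hnv]; norm_num
    have heig : hPD.1.eigenvalues i = l1 + s⁻¹ * (wf ⬝ᵥ (v : Fin d → ℝ)) ^ 2 := by
      have h := hquad (v : Fin d → ℝ)
      rw [hmv, dotProduct_smul, hvv, smul_eq_mul, mul_one] at h
      rw [h]; ring
    have hCS : (wf ⬝ᵥ (v : Fin d → ℝ)) ^ 2 ≤ ‖w‖ ^ 2 := by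
      rw [hwf, dot_inner w v]
      have habs := abs_real_inner_le_norm w v
      rw [hnv, mul_one] at habs
      nlinarith [abs_nonneg (⟪w,v⟫), sq_abs (⟪w,v⟫)]
    have hwle : ‖w‖ ≤ (C + l1) * ‖x‖ := by
      calc ‖w‖ ≤ ‖y‖ + ‖l1 • x‖ := norm_sub_le _ _
        _ = ‖y‖ + l1 * ‖x‖ := by rw [norm_smul, Real.norm_of_nonneg hl1pos.le]
        _ ≤ C * ‖x‖ + l1 * ‖x‖ := by linarith
        _ = (C + l1) * ‖x‖ := by ring
    constructor
    · rw [heig]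
      have : 0 ≤ s⁻¹ * (wf ⬝ᵥ (v : Fin d → ℝ)) ^ 2 := by positivity
      linarith
    · rw [heig]
      have hK : (0:ℝ) ≤ 2 * (C + l1) ^ 2 / l1' := by positivity
      have key : s⁻¹ * (wf ⬝ᵥ (v : Fin d → ℝ)) ^ 2 ≤ 2 * (C + l1) ^ 2 / l1' := by
        rw [inv_mul_le_iff₀ hs_pos]
        calc (wf ⬝ᵥ (v : Fin d → ℝ)) ^ 2 ≤ ‖w‖ ^ 2 := hCS
          _ ≤ (C + l1) ^ 2 * ‖x‖ ^ 2 := by nlinarith [norm_nonneg w, norm_nonneg x]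
          _ = (l1 * ‖x‖ ^ 2) * (2 * (C + l1) ^ 2 / l1') := by
              rw [hl1def]; field_simp
          _ ≤ s * (2 * (C + l1) ^ 2 / l1') := mul_le_mul_of_nonneg_right hs_lb hK
      linarith
end

section
/- Let X be a real random variable of the form X = aθ + ξ with a, θ ∈ ℝ fixed, where ξ satisfies E[ξ] = E[ξ³] = 0, E[ξ²] = σ² > 0, and E[ξ⁴] = c σ⁴ with 0 < c < 5. Then for ρ = (9−c)/4, E[(X² − ρσ²)²] = (a²θ² + ((c+3)/4)σ²)². -/
open MeasureTheory

theorem stmt9 {Ω : Type*} [MeasurableSpace Ω] (μ : Measure Ω) [IsProbabilityMeasure μ]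
    (ξ : Ω → ℝ) (a θ σ c : ℝ)
    (hint : ∀ n : ℕ, n ≤ 4 → Integrable (fun ω => ξ ω ^ n) μ)
    (h1 : ∫ ω, ξ ω ∂μ = 0) (h3 : ∫ ω, ξ ω ^ 3 ∂μ = 0)
    (h2 : ∫ ω, ξ ω ^ 2 ∂μ = σ ^ 2) (hσ : 0 < σ ^ 2)
    (h4 : ∫ ω, ξ ω ^ 4 ∂μ = c * σ ^ 4) (hc0 : 0 < c) (hc5 : c < 5) :
    ∫ ω, ((a * θ + ξ ω) ^ 2 - ((9 - c) / 4) * σ ^ 2) ^ 2 ∂μ =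
      (a ^ 2 * θ ^ 2 + ((c + 3) / 4) * σ ^ 2) ^ 2 := by
  have i1 : Integrable (fun ω => ξ ω) μ := by
    have := hint 1 (by norm_num); simpa using this
  have i2 := hint 2 (by norm_num)
  have i3 := hint 3 (by norm_num)
  have i4 := hint 4 (by norm_num)
  set b := a * θ with hb
  set ρ : ℝ := (9 - c) / 4 * σ ^ 2 with hρ
  have key : (fun ω => ((a * θ + ξ ω) ^ 2 - (9 - c) / 4 * σ ^ 2) ^ 2) =
      fun ω => ξ ω ^ 4 + ((4 * b) * ξ ω ^ 3 + ((6 * b ^ 2 - 2 * ρ) * ξ ω ^ 2 +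
        ((4 * b ^ 3 - 4 * b * ρ) * ξ ω + (b ^ 2 - ρ) ^ 2))) := by
    funext ω; simp only [hb, hρ]; ring
  rw [key]
  have J1 : Integrable (fun ω => (4 * b ^ 3 - 4 * b * ρ) * ξ ω + (b ^ 2 - ρ) ^ 2) μ :=
    (i1.const_mul _).add (integrable_const _)
  have J2 : Integrable (fun ω => (6 * b ^ 2 - 2 * ρ) * ξ ω ^ 2 +
      ((4 * b ^ 3 - 4 * b * ρ) * ξ ω + (b ^ 2 - ρ) ^ 2)) μ := (i2.const_mul _).add J1
  have J3 : Integrable (fun ω => 4 * b * ξ ω ^ 3 + ((6 * b ^ 2 - 2 * ρ) * ξ ω ^ 2 +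
      ((4 * b ^ 3 - 4 * b * ρ) * ξ ω + (b ^ 2 - ρ) ^ 2))) μ := (i3.const_mul _).add J2
  rw [integral_add i4 J3, integral_add (i3.const_mul _) J2,
    integral_add (i2.const_mul _) J1, integral_add (i1.const_mul _) (integrable_const _),
    integral_const_mul, integral_const_mul, integral_const_mul, integral_const,
    h1, h2, h3, h4]
  simp only [hρ, hb, measure_univ, ENNReal.toReal_one, probReal_univ, smul_eq_mul]
  ring
end

section
/- Let X = aθ + ξ with a, θ ∈ ℝ, where ξ satisfies E[ξ] = E[ξ³] = 0, E[ξ²] = σ² > 0, and E[ξ⁴] = cσ⁴ for some 0 < c < 5. Then E[min(X², (9−c)σ²/4)] ≥ (5−c)σ²/4. -/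
open MeasureTheory

theorem stmt10 {Ω : Type*} [MeasurableSpace Ω] (μ : Measure Ω) [IsProbabilityMeasure μ]
    (ξ : Ω → ℝ) (a θ σ c : ℝ)
    (hint : ∀ n : ℕ, n ≤ 4 → Integrable (fun ω => ξ ω ^ n) μ)
    (h1 : ∫ ω, ξ ω ∂μ = 0) (h3 : ∫ ω, ξ ω ^ 3 ∂μ = 0)
    (h2 : ∫ ω, ξ ω ^ 2 ∂μ = σ ^ 2) (hσ : 0 < σ ^ 2)
    (h4 : ∫ ω, ξ ω ^ 4 ∂μ = c * σ ^ 4) (hc0 : 0 < c) (hc5 : c < 5) :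
    (5 - c) * σ ^ 2 / 4 ≤ ∫ ω, min ((a * θ + ξ ω) ^ 2) ((9 - c) * σ ^ 2 / 4) ∂μ := by
  set b := a * θ with hb
  set m : ℝ := (9 - c) * σ ^ 2 / 4 with hm
  set s : ℝ := b ^ 2 + (c + 3) * σ ^ 2 / 4 with hs
  have hspos : 0 < s := by rw [hs]; nlinarith [sq_nonneg b]
  have h4s : (0:ℝ) < 4 * s := by linarith
  have hi1 : Integrable (fun ω => ξ ω) μ := by
    have := hint 1 (by norm_num); simpa using this
  have hi2 := hint 2 (by norm_num)
  have hi3 := hint 3 (by norm_num)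
  have hi4 := hint 4 (by norm_num)
  have hA1 : Integrable (fun ω => (b:ℝ) ^ 2 + 2 * b * ξ ω) μ :=
    (integrable_const _).add (hi1.const_mul _)
  have hA2 : Integrable (fun ω => (b:ℝ) ^ 2 + 2 * b * ξ ω + ξ ω ^ 2) μ := hA1.add hi2
  have hf : Integrable (fun ω => (b + ξ ω) ^ 2) μ := by
    have e : (fun ω => (b + ξ ω) ^ 2) = fun ω => b ^ 2 + 2 * b * ξ ω + ξ ω ^ 2 := by
      funext ω; ring
    rw [e]; exact hA2
  have hB1 : Integrable (fun ω => (b ^ 2 - m) ^ 2 + 4 * (b ^ 2 - m) * b * ξ ω) μ :=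
    (integrable_const _).add (hi1.const_mul _)
  have hB2 : Integrable (fun ω => (b ^ 2 - m) ^ 2 + 4 * (b ^ 2 - m) * b * ξ ω
      + (4 * b ^ 2 + 2 * (b ^ 2 - m)) * ξ ω ^ 2) μ := hB1.add (hi2.const_mul _)
  have hB3 : Integrable (fun ω => (b ^ 2 - m) ^ 2 + 4 * (b ^ 2 - m) * b * ξ ω
      + (4 * b ^ 2 + 2 * (b ^ 2 - m)) * ξ ω ^ 2 + 4 * b * ξ ω ^ 3) μ :=
    hB2.add (hi3.const_mul _)
  have hB4 : Integrable (fun ω => (b ^ 2 - m) ^ 2 + 4 * (b ^ 2 - m) * b * ξ ω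
      + (4 * b ^ 2 + 2 * (b ^ 2 - m)) * ξ ω ^ 2 + 4 * b * ξ ω ^ 3 + ξ ω ^ 4) μ :=
    hB3.add hi4
  have hg : Integrable (fun ω => ((b + ξ ω) ^ 2 - m) ^ 2) μ := by
    have e : (fun ω => ((b + ξ ω) ^ 2 - m) ^ 2) = fun ω =>
        (b ^ 2 - m) ^ 2 + 4 * (b ^ 2 - m) * b * ξ ω
          + (4 * b ^ 2 + 2 * (b ^ 2 - m)) * ξ ω ^ 2 + 4 * b * ξ ω ^ 3 + ξ ω ^ 4 := by
      funext ω; ring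
    rw [e]; exact hB4
  have If : ∫ ω, (b + ξ ω) ^ 2 ∂μ = b ^ 2 + σ ^ 2 := by
    have e : (fun ω => (b + ξ ω) ^ 2) = fun ω => b ^ 2 + 2 * b * ξ ω + ξ ω ^ 2 := by
      funext ω; ring
    rw [e, integral_add hA1 hi2, integral_add (integrable_const _) (hi1.const_mul _),
      integral_const, integral_const_mul, h1, h2]
    simp
  have Ig : ∫ ω, ((b + ξ ω) ^ 2 - m) ^ 2 ∂μ = s ^ 2 := by
    have e : (fun ω => ((b + ξ ω) ^ 2 - m) ^ 2) = fun ω =>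
        (b ^ 2 - m) ^ 2 + 4 * (b ^ 2 - m) * b * ξ ω
          + (4 * b ^ 2 + 2 * (b ^ 2 - m)) * ξ ω ^ 2 + 4 * b * ξ ω ^ 3 + ξ ω ^ 4 := by
      funext ω; ring
    rw [e, integral_add hB3 hi4, integral_add hB2 (hi3.const_mul _),
      integral_add hB1 (hi2.const_mul _),
      integral_add (integrable_const _) (hi1.const_mul _), integral_const,
      integral_const_mul, integral_const_mul, integral_const_mul, h1, h2, h3, h4]
    simp only [measure_univ, probReal_univ, ENNReal.toReal_one, smul_eq_mul, one_mul, mul_zero, add_zero]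
    rw [hs, hm]; ring
  have hC1 : Integrable (fun ω => (1 / 2) * (b + ξ ω) ^ 2
      - (1 / (4 * s)) * ((b + ξ ω) ^ 2 - m) ^ 2) μ := (hf.const_mul _).sub (hg.const_mul _)
  have hlo : Integrable (fun ω =>
      (1 / 2) * (b + ξ ω) ^ 2 - (1 / (4 * s)) * ((b + ξ ω) ^ 2 - m) ^ 2 + (m / 2 - s / 4)) μ :=
    hC1.add (integrable_const _)
  have hmin : Integrable (fun ω => min ((b + ξ ω) ^ 2) m) μ := hf.inf (integrable_const m)
  have key : ∀ ω, (1 / 2) * (b + ξ ω) ^ 2 - (1 / (4 * s)) * ((b + ξ ω) ^ 2 - m) ^ 2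
      + (m / 2 - s / 4) ≤ min ((b + ξ ω) ^ 2) m := by
    intro ω
    set x := (b + ξ ω) ^ 2 with hx
    rcases le_total x m with h | h
    · rw [min_eq_left h, ← sub_nonneg]
      have e : x - ((1 / 2) * x - (1 / (4 * s)) * (x - m) ^ 2 + (m / 2 - s / 4))
          = (x - m + s) ^ 2 / (4 * s) := by
        field_simp; ring
      rw [e]; positivity
    · rw [min_eq_right h, ← sub_nonneg]
      have e : m - ((1 / 2) * x - (1 / (4 * s)) * (x - m) ^ 2 + (m / 2 - s / 4))
          = (x - m - s) ^ 2 / (4 * s) := by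
        field_simp; ring
      rw [e]; positivity
  have hle : ∫ ω, ((1 / 2) * (b + ξ ω) ^ 2 - (1 / (4 * s)) * ((b + ξ ω) ^ 2 - m) ^ 2
      + (m / 2 - s / 4)) ∂μ ≤ ∫ ω, min ((b + ξ ω) ^ 2) m ∂μ :=
    integral_mono hlo hmin key
  have Ilo : ∫ ω, ((1 / 2) * (b + ξ ω) ^ 2 - (1 / (4 * s)) * ((b + ξ ω) ^ 2 - m) ^ 2
      + (m / 2 - s / 4)) ∂μ = (5 - c) * σ ^ 2 / 4 := by
    rw [integral_add hC1 (integrable_const _),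
      integral_sub (hf.const_mul _) (hg.const_mul _), integral_const_mul, integral_const_mul,
      If, Ig, integral_const]
    simp only [measure_univ, probReal_univ, ENNReal.toReal_one, one_smul]
    rw [hm, hs]
    field_simp
    ring
  linarith [hle, Ilo.ge, Ilo.le]
end

section
/- Telescoping product bound for conditional eigenvalues: Let (F_k) be a filtration, let M_{k₀},…,M_k be symmetric positive definite random matrices with M_i measurable with respect to F_{i−1}, and suppose for constants 0 < λ₁ ≤ λ₂ that λ₁ ≤ E[Λ_(1)(M_i) | F_{i−2}] and Λ_(d)(M_i) ≤ λ₂ almost surely, and γ_i λ₂ ≤ 1 for all i. Then E ∏_{i=k₀}^{k} ‖I − γ_i M_i‖² ≤ ∏_{i=k₀}^{k} (1 − γ_i λ₁). -/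
set_option synthInstance.maxHeartbeats 1000000
set_option maxHeartbeats 1000000

open MeasureTheory

lemma aux_norm_sq_le {d : ℕ} (hd : 0 < d) (A : Matrix (Fin d) (Fin d) ℝ) (hA : A.PosDef)
    (γ l2 : ℝ) (hγ0 : 0 ≤ γ) (hγ : γ * l2 ≤ 1)
    (hup : (⨆ j, hA.1.eigenvalues j) ≤ l2) :
    ‖Matrix.toEuclideanCLM (𝕜 := ℝ) (n := Fin d) (1 - γ • A)‖ ^ 2 ≤
      1 - γ * ⨅ j, hA.1.eigenvalues j := by
  haveI : NeZero d := ⟨hd.ne'⟩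
  set ev := hA.1.eigenvalues with hev
  have hbddA : BddAbove (Set.range ev) := (Set.finite_range ev).bddAbove
  have hbddB : BddBelow (Set.range ev) := (Set.finite_range ev).bddBelow
  set c : ℝ := 1 - γ * ⨅ j, ev j with hc
  have hevpos : ∀ j, 0 < ev j := hA.eigenvalues_pos
  have hev_le : ∀ j, ev j ≤ l2 := fun j => (le_ciSup hbddA j).trans hup
  have hinf_le : ∀ j, (⨅ j, ev j) ≤ ev j := fun j => ciInf_le hbddB j
  have hinf_pos : 0 < ⨅ j, ev j := by
    obtain ⟨j0, hj0⟩ := exists_eq_ciInf_of_finite (f := ev)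
    rw [← hj0]; exact hevpos j0
  have hγev : ∀ j, γ * ev j ≤ 1 := fun j =>
    (mul_le_mul_of_nonneg_left (hev_le j) hγ0).trans hγ
  have hc0 : 0 ≤ c := by
    have := hγev ⟨0, hd⟩
    have h2 : γ * (⨅ j, ev j) ≤ γ * ev ⟨0, hd⟩ :=
      mul_le_mul_of_nonneg_left (hinf_le _) hγ0
    simp only [hc]; linarith
  have hc1 : c ≤ 1 := by
    have : 0 ≤ γ * ⨅ j, ev j := mul_nonneg hγ0 hinf_pos.le
    simp only [hc]; linarith
  -- spectral decomposition
  set U : Matrix (Fin d) (Fin d) ℝ := (hA.1.eigenvectorUnitary : Matrix (Fin d) (Fin d) ℝ)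
    with hU
  have hmem := hA.1.eigenvectorUnitary.2
  rw [Unitary.mem_iff] at hmem
  have hdecomp : (1 : Matrix (Fin d) (Fin d) ℝ) - γ • A
      = U * Matrix.diagonal (fun j => 1 - γ * ev j) * star U := by
    conv_lhs => rw [hA.1.spectral_theorem, Unitary.conjStarAlgAut_apply]
    have h1 : (1 : Matrix (Fin d) (Fin d) ℝ) = U * 1 * star U := by
      rw [mul_one, hmem.2]
    have hdiag : (1 : Matrix (Fin d) (Fin d) ℝ) - γ •
        Matrix.diagonal (RCLike.ofReal ∘ ev) = Matrix.diagonal (fun j => 1 - γ * ev j) := by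
      ext i j
      rcases eq_or_ne i j with h | h <;>
        simp [Matrix.one_apply, Matrix.diagonal_apply, h, RCLike.ofReal, Matrix.sub_apply]
    rw [← hdiag, Matrix.mul_sub, Matrix.sub_mul, mul_one, hmem.2, Matrix.mul_smul,
      Matrix.smul_mul]
  -- now the norm bound
  rw [hdecomp]
  set u := Matrix.toEuclideanCLM (𝕜 := ℝ) (n := Fin d) U with hu
  set T := Matrix.toEuclideanCLM (𝕜 := ℝ) (n := Fin d)
    (Matrix.diagonal (fun j => 1 - γ * ev j)) with hT
  have hmap : Matrix.toEuclideanCLM (𝕜 := ℝ) (n := Fin d)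
      (U * Matrix.diagonal (fun j => 1 - γ * ev j) * star U) = u * T * star u := by
    rw [map_mul, map_mul, map_star]
  have hnorm1 : ‖(1 : EuclideanSpace ℝ (Fin d) →L[ℝ] EuclideanSpace ℝ (Fin d))‖ ≤ 1 :=
    ContinuousLinearMap.norm_id_le
  have hu_le : ‖u‖ ≤ 1 := by
    have h2 : ‖u‖ * ‖u‖ ≤ 1 := by
      rw [← CStarRing.norm_star_mul_self, ← map_star, ← map_mul, hmem.1, map_one]
      exact hnorm1
    nlinarith [norm_nonneg u]
  have hsu_le : ‖star u‖ ≤ 1 := by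
    have h2 : ‖star u‖ * ‖star u‖ ≤ 1 := by
      rw [← CStarRing.norm_star_mul_self, star_star, ← map_star, ← map_mul, hmem.2, map_one]
      exact hnorm1
    nlinarith [norm_nonneg (star u)]
  have hTx : ∀ x : EuclideanSpace ℝ (Fin d), ‖T x‖ ≤ c * ‖x‖ := by
    intro x
    have happ : ∀ j, T x j = (1 - γ * ev j) * x j := by
      intro j
      have := Matrix.ofLp_toEuclideanCLM (𝕜 := ℝ) (n := Fin d)
        (Matrix.diagonal (fun j => 1 - γ * ev j)) x
      have h2 := congrFun this j
      exact h2.trans (by simp [Matrix.mulVec_diagonal])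
    rw [EuclideanSpace.norm_eq, EuclideanSpace.norm_eq]
    rw [show c * Real.sqrt (∑ i, ‖x i‖ ^ 2) = Real.sqrt (c ^ 2 * ∑ i, ‖x i‖ ^ 2) by
      rw [Real.sqrt_mul (sq_nonneg c), Real.sqrt_sq hc0]]
    apply Real.sqrt_le_sqrt
    rw [Finset.mul_sum]
    apply Finset.sum_le_sum
    intro j _
    have hg0 : 0 ≤ 1 - γ * ev j := by linarith [hγev j]
    have hgc : 1 - γ * ev j ≤ c := by
      have := mul_le_mul_of_nonneg_left (hinf_le j) hγ0
      simp only [hc]; linarith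
    rw [happ j]
    have hxa : |1 - γ * ev j| = 1 - γ * ev j := abs_of_nonneg hg0
    simp only [Real.norm_eq_abs, abs_mul, hxa, mul_pow]
    exact mul_le_mul_of_nonneg_right (pow_le_pow_left₀ hg0 hgc 2) (sq_nonneg _)
  have hT_le : ‖T‖ ≤ c := ContinuousLinearMap.opNorm_le_bound T hc0 hTx
  have hfinal : ‖u * T * star u‖ ≤ c := by
    have h1 : ‖u * T * star u‖ ≤ ‖u * T‖ * ‖star u‖ := norm_mul_le _ _
    have h2 : ‖u * T‖ ≤ ‖u‖ * ‖T‖ := norm_mul_le _ _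
    nlinarith [norm_nonneg u, norm_nonneg T, norm_nonneg (star u), norm_nonneg (u * T)]
  rw [hmap]
  calc ‖u * T * star u‖ ^ 2 ≤ c ^ 2 := pow_le_pow_left₀ (norm_nonneg _) hfinal 2
  _ ≤ c := by nlinarith


lemma aux_inf_pos {d : ℕ} (hd : 0 < d) {A : Matrix (Fin d) (Fin d) ℝ} (hA : A.PosDef) :
    0 < ⨅ j, hA.1.eigenvalues j := by
  haveI : NeZero d := ⟨hd.ne'⟩
  obtain ⟨j0, hj0⟩ := exists_eq_ciInf_of_finite (f := hA.1.eigenvalues)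
  rw [← hj0]
  exact hA.eigenvalues_pos j0

lemma aux_le_one {d : ℕ} (hd : 0 < d) (A : Matrix (Fin d) (Fin d) ℝ) (hA : A.PosDef)
    (γ l2 : ℝ) (hγ0 : 0 ≤ γ) (hγ : γ * l2 ≤ 1)
    (hup : (⨆ j, hA.1.eigenvalues j) ≤ l2) :
    ‖Matrix.toEuclideanCLM (𝕜 := ℝ) (n := Fin d) (1 - γ • A)‖ ^ 2 ≤ 1 := by
  refine (aux_norm_sq_le hd A hA γ l2 hγ0 hγ hup).trans ?_
  have h1 := aux_inf_pos hd hA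
  have h2 : 0 ≤ γ * ⨅ j, hA.1.eigenvalues j := mul_nonneg hγ0 h1.le
  linarith

lemma aux_cont {d : ℕ} (γi : ℝ) :
    Continuous fun A : Matrix (Fin d) (Fin d) ℝ =>
      ‖Matrix.toEuclideanCLM (𝕜 := ℝ) (n := Fin d) (1 - γi • A)‖ ^ 2 := by
  have hlin : Continuous fun A : Matrix (Fin d) (Fin d) ℝ =>
      Matrix.toEuclideanCLM (𝕜 := ℝ) (n := Fin d) A :=
    LinearMap.continuous_of_finiteDimensional
      ({ toFun := fun A => Matrix.toEuclideanCLM (𝕜 := ℝ) (n := Fin d) A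
         map_add' := fun a b => map_add _ a b
         map_smul' := fun r a => map_smul _ r a } :
        Matrix (Fin d) (Fin d) ℝ →ₗ[ℝ] _)
  have haff : Continuous fun A : Matrix (Fin d) (Fin d) ℝ =>
      (1 : Matrix (Fin d) (Fin d) ℝ) - γi • A :=
    continuous_const.sub (continuous_id.const_smul γi)
  exact ((hlin.comp haff).norm.pow 2)

lemma aux_pi {Ω : Type*} {m : MeasurableSpace Ω} {d : ℕ} (Mi : Ω → Matrix (Fin d) (Fin d) ℝ)
    (h : ∀ a b, Measurable[m] fun ω => Mi ω a b) :
    Measurable[m] fun ω (a b : Fin d) => Mi ω a b :=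
  measurable_pi_lambda _ fun a => measurable_pi_lambda _ fun b => h a b

lemma aux_meas {Ω : Type*} {m : MeasurableSpace Ω} {d : ℕ}
    (Mi : Ω → Matrix (Fin d) (Fin d) ℝ) (γi : ℝ)
    (hmeas : Measurable[m] (fun ω (a b : Fin d) => Mi ω a b)) :
    Measurable[m] fun ω =>
      ‖Matrix.toEuclideanCLM (𝕜 := ℝ) (n := Fin d) (1 - γi • Mi ω)‖ ^ 2 := by
  have hφ : Continuous fun A : Fin d → Fin d → ℝ =>
      ‖Matrix.toEuclideanCLM (𝕜 := ℝ) (n := Fin d) (1 - γi • Matrix.of A)‖ ^ 2 := by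
    have hlin : Continuous fun A : Fin d → Fin d → ℝ =>
        Matrix.toEuclideanCLM (𝕜 := ℝ) (n := Fin d) (Matrix.of A) :=
      LinearMap.continuous_of_finiteDimensional
        ({ toFun := fun A => Matrix.toEuclideanCLM (𝕜 := ℝ) (n := Fin d) (Matrix.of A)
           map_add' := fun a b => map_add _ a b
           map_smul' := fun r a => map_smul _ r a } :
          (Fin d → Fin d → ℝ) →ₗ[ℝ] _)
    have hlin2 : Continuous fun A : Fin d → Fin d → ℝ =>
        Matrix.toEuclideanCLM (𝕜 := ℝ) (n := Fin d) (1 - γi • Matrix.of A) := by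
      have : (fun A : Fin d → Fin d → ℝ =>
          Matrix.toEuclideanCLM (𝕜 := ℝ) (n := Fin d) (1 - γi • Matrix.of A)) =
          fun A : Fin d → Fin d → ℝ =>
            Matrix.toEuclideanCLM (𝕜 := ℝ) (n := Fin d) (1 : Matrix (Fin d) (Fin d) ℝ) -
              γi • Matrix.toEuclideanCLM (𝕜 := ℝ) (n := Fin d) (Matrix.of A) := by
        funext A
        rw [map_sub, _root_.map_smul]
      rw [this]
      exact continuous_const.sub (hlin.const_smul γi)
    exact hlin2.norm.pow 2
  exact hφ.measurable.comp hmeas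

lemma aux_step {Ω : Type*} {m₀ : MeasurableSpace Ω} (μ : Measure Ω) [IsProbabilityMeasure μ]
    {d : ℕ} (hd : 0 < d) (F : Filtration ℤ m₀) (i : ℕ)
    (Mi : Ω → Matrix (Fin d) (Fin d) ℝ) (γi l1 l2 : ℝ)
    (hl1 : 0 < l1)
    (hpos : ∀ ω, (Mi ω).PosDef)
    (hmeas : Measurable[F ((i : ℤ) - 1)] (fun ω (a b : Fin d) => Mi ω a b))
    (hγ0 : 0 ≤ γi) (hγ : γi * l2 ≤ 1)
    (hlow : ∀ᵐ ω ∂μ, l1 ≤ (μ[fun ω' => ⨅ j, (hpos ω').1.eigenvalues j | F ((i : ℤ) - 2)]) ω)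
    (hup : ∀ᵐ ω ∂μ, (⨆ j, (hpos ω).1.eigenvalues j) ≤ l2)
    (f : Ω → ℝ) (hfm : StronglyMeasurable[F ((i : ℤ) - 2)] f)
    (hf0 : ∀ ω, 0 ≤ f ω) (hf1 : f ≤ᵐ[μ] fun _ => 1) :
    ∫ ω, f ω * ‖Matrix.toEuclideanCLM (𝕜 := ℝ) (n := Fin d) (1 - γi • Mi ω)‖ ^ 2 ∂μ ≤
      (1 - γi * l1) * ∫ ω, f ω ∂μ := by
  set L : Ω → ℝ := fun ω => ⨅ j, (hpos ω).1.eigenvalues j with hL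
  set X : Ω → ℝ := fun ω =>
    ‖Matrix.toEuclideanCLM (𝕜 := ℝ) (n := Fin d) (1 - γi • Mi ω)‖ ^ 2 with hXdef
  have hX0 : ∀ ω, 0 ≤ X ω := fun ω => sq_nonneg _
  have hXle : ∀ᵐ ω ∂μ, X ω ≤ 1 - γi * L ω :=
    hup.mono fun ω h => aux_norm_sq_le hd _ (hpos ω) _ _ hγ0 hγ h
  have hX1 : ∀ᵐ ω ∂μ, X ω ≤ 1 :=
    hup.mono fun ω h => aux_le_one hd _ (hpos ω) _ _ hγ0 hγ h
  have hXm : Measurable[F ((i : ℤ) - 1)] X := aux_meas Mi γi hmeas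
  have hXm0 : Measurable[m₀] X := hXm.mono (F.le _) le_rfl
  have hXint : Integrable X μ := by
    refine Integrable.mono' (integrable_const (1 : ℝ)) hXm0.aestronglyMeasurable ?_
    filter_upwards [hX1] with ω h1
    rw [Real.norm_eq_abs, abs_of_nonneg (hX0 ω)]
    exact h1
  have hLint : Integrable L μ := by
    by_contra hnot
    rw [condExp_of_not_integrable hnot] at hlow
    obtain ⟨ω, hω⟩ := hlow.exists
    simp only [Pi.zero_apply] at hω
    linarith
  have hfm0 : StronglyMeasurable[m₀] f := hfm.mono (F.le _)
  have hfint : Integrable f μ := by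
    refine Integrable.mono' (integrable_const (1 : ℝ)) hfm0.aestronglyMeasurable ?_
    filter_upwards [hf1] with ω h1
    rw [Real.norm_eq_abs, abs_of_nonneg (hf0 ω)]
    exact h1
  have hfg_int : Integrable (f * X) μ := by
    refine Integrable.mono' (integrable_const (1 : ℝ))
      (hfm0.aestronglyMeasurable.mul hXm0.aestronglyMeasurable) ?_
    filter_upwards [hf1, hX1] with ω h1 h2
    rw [Pi.mul_apply, Real.norm_eq_abs, abs_of_nonneg (mul_nonneg (hf0 ω) (hX0 ω))]
    calc f ω * X ω ≤ 1 * 1 := mul_le_mul h1 h2 (hX0 ω) zero_le_one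
    _ = 1 := one_mul 1
  have hcondX : μ[X|F ((i : ℤ) - 2)] ≤ᵐ[μ] fun _ => 1 - γi * l1 := by
    have hhint : Integrable (fun ω => 1 - γi * L ω) μ :=
      (integrable_const (1 : ℝ)).sub (hLint.const_mul γi)
    have h1 : μ[X|F ((i : ℤ) - 2)] ≤ᵐ[μ] μ[fun ω => 1 - γi * L ω|F ((i : ℤ) - 2)] :=
      condExp_mono hXint hhint hXle
    have hsub : μ[(fun _ => (1 : ℝ)) - γi • L|F ((i : ℤ) - 2)] =ᵐ[μ]
        μ[fun _ => (1 : ℝ)|F ((i : ℤ) - 2)] - μ[γi • L|F ((i : ℤ) - 2)] :=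
      condExp_sub (integrable_const (1 : ℝ)) (hLint.smul γi) _
    have hsm : μ[γi • L|F ((i : ℤ) - 2)] =ᵐ[μ] γi • μ[L|F ((i : ℤ) - 2)] := condExp_smul γi L _
    have h2 : μ[fun ω => 1 - γi * L ω|F ((i : ℤ) - 2)] =ᵐ[μ]
        fun ω => 1 - γi * (μ[L|F ((i : ℤ) - 2)]) ω := by
      have heq : (fun ω => 1 - γi * L ω) = (fun _ => (1 : ℝ)) - γi • L := by
        funext ω; simp [smul_eq_mul]
      rw [heq]
      refine hsub.trans ?_
      rw [condExp_const (F.le _)]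
      filter_upwards [hsm] with ω hω
      simp only [Pi.sub_apply, Pi.smul_apply, smul_eq_mul, hω]
    refine h1.trans (h2.le.trans ?_)
    filter_upwards [hlow] with ω hω
    have := mul_le_mul_of_nonneg_left hω hγ0
    linarith
  have hpull : μ[f * X|F ((i : ℤ) - 2)] =ᵐ[μ] f * μ[X|F ((i : ℤ) - 2)] :=
    condExp_mul_of_stronglyMeasurable_left hfm hfg_int hXint
  calc ∫ ω, f ω * X ω ∂μ = ∫ ω, (μ[f * X|F ((i : ℤ) - 2)]) ω ∂μ :=
        (integral_condExp (F.le _)).symm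
  _ ≤ ∫ ω, f ω * (1 - γi * l1) ∂μ := by
      refine integral_mono_ae integrable_condExp (hfint.mul_const _) ?_
      filter_upwards [hpull, hcondX] with ω h1 h2
      rw [h1, Pi.mul_apply]
      exact mul_le_mul_of_nonneg_left h2 (hf0 ω)
  _ = (1 - γi * l1) * ∫ ω, f ω ∂μ := by
      rw [integral_mul_const, mul_comm]



/-- Telescoping product bound for conditional eigenvalues of random matrices. -/
theorem stmt17 {Ω : Type*} {m₀ : MeasurableSpace Ω} (μ : Measure Ω) [IsProbabilityMeasure μ]
    {d : ℕ} (hd : 0 < d) (F : Filtration ℤ m₀) (k₀ k : ℕ) (hk : k₀ ≤ k)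
    (M : ℕ → Ω → Matrix (Fin d) (Fin d) ℝ) (γ : ℕ → ℝ) (l1 l2 : ℝ)
    (hl1 : 0 < l1) (hl12 : l1 ≤ l2)
    (hpos : ∀ i ω, (M i ω).PosDef)
    (hmeas : ∀ i, k₀ ≤ i → i ≤ k → ∀ a b, Measurable[F ((i : ℤ) - 1)] fun ω => M i ω a b)
    (hγ0 : ∀ i, k₀ ≤ i → i ≤ k → 0 ≤ γ i)
    (hγ : ∀ i, k₀ ≤ i → i ≤ k → γ i * l2 ≤ 1)
    (hlow : ∀ i, k₀ ≤ i → i ≤ k →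
      ∀ᵐ ω ∂μ, l1 ≤ (μ[fun ω' => ⨅ j, (hpos i ω').1.eigenvalues j | F ((i : ℤ) - 2)]) ω)
    (hup : ∀ i, k₀ ≤ i → i ≤ k → ∀ᵐ ω ∂μ, (⨆ j, (hpos i ω).1.eigenvalues j) ≤ l2) :
    ∫ ω, ∏ i ∈ Finset.Icc k₀ k,
        ‖Matrix.toEuclideanCLM (𝕜 := ℝ) (n := Fin d) (1 - γ i • M i ω)‖ ^ 2 ∂μ ≤
      ∏ i ∈ Finset.Icc k₀ k, (1 - γ i * l1) := by
  revert hmeas hγ0 hγ hlow hup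
  induction k, hk using Nat.le_induction with
  | base =>
    intro hmeas hγ0 hγ hlow hup
    rw [Finset.Icc_self]
    simp only [Finset.prod_singleton]
    have h := aux_step μ hd F k₀ (M k₀) (γ k₀) l1 l2 hl1 (hpos k₀)
      (aux_pi (M k₀) (hmeas k₀ le_rfl le_rfl))
      (hγ0 k₀ le_rfl le_rfl) (hγ k₀ le_rfl le_rfl) (hlow k₀ le_rfl le_rfl)
      (hup k₀ le_rfl le_rfl) (fun _ => 1) stronglyMeasurable_const (fun _ => zero_le_one)
      (Filter.Eventually.of_forall fun _ => le_rfl)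
    simpa using h
  | succ n hn ih =>
    intro hmeas hγ0 hγ hlow hup
    have hle : ∀ i : ℕ, i ≤ n → i ≤ n + 1 := fun i h => h.trans (Nat.le_succ n)
    have ih' := ih (fun i h1 h2 => hmeas i h1 (hle i h2)) (fun i h1 h2 => hγ0 i h1 (hle i h2))
      (fun i h1 h2 => hγ i h1 (hle i h2)) (fun i h1 h2 => hlow i h1 (hle i h2))
      (fun i h1 h2 => hup i h1 (hle i h2))
    have hkn : k₀ ≤ n + 1 := hn.trans (Nat.le_succ n)
    simp_rw [Finset.prod_Icc_succ_top hkn]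
    set f : Ω → ℝ := fun ω => ∏ i ∈ Finset.Icc k₀ n,
      ‖Matrix.toEuclideanCLM (𝕜 := ℝ) (n := Fin d) (1 - γ i • M i ω)‖ ^ 2 with hf
    have hfm : StronglyMeasurable[F (((n : ℕ) + 1 : ℤ) - 2)] f := by
      apply Measurable.stronglyMeasurable
      apply Finset.measurable_prod
      intro i hi
      rw [Finset.mem_Icc] at hi
      have h1 : Measurable[F ((i : ℤ) - 1)] fun ω =>
          ‖Matrix.toEuclideanCLM (𝕜 := ℝ) (n := Fin d) (1 - γ i • M i ω)‖ ^ 2 :=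
        aux_meas (M i) (γ i)
          (aux_pi (M i) (hmeas i hi.1 (hle i hi.2)))
      refine h1.mono (F.mono ?_) le_rfl
      have := hi.2
      omega
    have hf0 : ∀ ω, 0 ≤ f ω := fun ω => Finset.prod_nonneg fun i _ => sq_nonneg _
    have hf1 : f ≤ᵐ[μ] fun _ => 1 := by
      have hae : ∀ᵐ ω ∂μ, ∀ i ∈ (Finset.Icc k₀ n : Set ℕ), (‖Matrix.toEuclideanCLM (𝕜 := ℝ)
          (n := Fin d) (1 - γ i • M i ω)‖ ^ 2 : ℝ) ≤ 1 := by
        rw [ae_ball_iff ((Finset.Icc k₀ n).countable_toSet)]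
        intro i hi
        rw [Finset.mem_coe, Finset.mem_Icc] at hi
        exact (hup i hi.1 (hle i hi.2)).mono fun ω h =>
          aux_le_one hd _ (hpos i ω) _ _ (hγ0 i hi.1 (hle i hi.2)) (hγ i hi.1 (hle i hi.2)) h
      filter_upwards [hae] with ω hω
      exact Finset.prod_le_one (fun i _ => sq_nonneg _) fun i hi => hω i (Finset.mem_coe.2 hi)
    have hstep := aux_step μ hd F (n + 1) (M (n + 1)) (γ (n + 1)) l1 l2 hl1 (hpos (n + 1))
      (aux_pi (M (n + 1)) (hmeas (n + 1) hkn le_rfl))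
      (hγ0 (n + 1) hkn le_rfl) (hγ (n + 1) hkn le_rfl) (hlow (n + 1) hkn le_rfl)
      (hup (n + 1) hkn le_rfl) f (by exact_mod_cast hfm) hf0 hf1
    have hc : 0 ≤ 1 - γ (n + 1) * l1 := by
      have h1 : γ (n + 1) * l1 ≤ γ (n + 1) * l2 :=
        mul_le_mul_of_nonneg_left hl12 (hγ0 (n + 1) hkn le_rfl)
      have h2 := hγ (n + 1) hkn le_rfl
      linarith
    calc ∫ ω, f ω * ‖Matrix.toEuclideanCLM (𝕜 := ℝ) (n := Fin d)
            (1 - γ (n + 1) • M (n + 1) ω)‖ ^ 2 ∂μ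
        ≤ (1 - γ (n + 1) * l1) * ∫ ω, f ω ∂μ := hstep
    _ ≤ (1 - γ (n + 1) * l1) * ∏ i ∈ Finset.Icc k₀ n, (1 - γ i * l1) :=
        mul_le_mul_of_nonneg_left ih' hc
    _ = (∏ i ∈ Finset.Icc k₀ n, (1 - γ i * l1)) * (1 - γ (n + 1) * l1) := mul_comm _ _
end
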